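/- Let (y, z, θ) solve the translator system with μ ≠ 0 and f(θ₀) ≠ 0, where f(θ) = μ·cos θ − (θ − θ₀ + λ)·sin θ. Then the set { s ∈ ℝ : sin θ(s) = 0 } contains at most one element (so z has at most one critical point), and the set { s ∈ ℝ : cos θ(s) = 0 } contains at most two elements (so y has at most two critical points). -/

import Mathlib

open Real Filter Topology

theorem stmt9
    (lam μ θ₀ : ℝ) (y z θ : ℝ → ℝ)
    (hy0 : y 0 = 0) (hz0 : z 0 = 0) (hθ0 : θ 0 = θ₀)
    (hy : ∀ s : ℝ, HasDerivAt y (Real.exp (z s) * Real.cos (θ s)) s)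
    (hz : ∀ s : ℝ, HasDerivAt z (Real.sin (θ s)) s)
    (hθ : ∀ s : ℝ, HasDerivAt θ
      (-lam * Real.exp (-z s) * Real.sin (θ s) +
        μ * (Real.cos (θ s) - y s * Real.exp (-z s) * Real.sin (θ s))) s)
    (hμ : μ ≠ 0)
    (hne : μ * Real.cos θ₀ - (θ₀ - θ₀ + lam) * Real.sin θ₀ ≠ 0) :
    {s : ℝ | Real.sin (θ s) = 0}.Subsingleton ∧
    {s : ℝ | Real.cos (θ s) = 0}.encard ≤ 2 := by
  have hc0 : μ * Real.cos θ₀ - lam * Real.sin θ₀ ≠ 0 := by simpa using hne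
  have hcθ : Continuous θ := continuous_iff_continuousAt.mpr fun s => (hθ s).continuousAt
  have hcz : Continuous z := continuous_iff_continuousAt.mpr fun s => (hz s).continuousAt
  have hcy : Continuous y := continuous_iff_continuousAt.mpr fun s => (hy s).continuousAt
  -- derivative of W
  have hWd : ∀ s : ℝ, HasDerivAt
      (fun u => μ * Real.exp (z u) * Real.cos (θ u) - (lam + μ * y u) * Real.sin (θ u))
      (-((-lam * Real.exp (-z s) * Real.sin (θ s) +
          μ * (Real.cos (θ s) - y s * Real.exp (-z s) * Real.sin (θ s))) *
         (μ * Real.exp (z s) * Real.sin (θ s) + (lam + μ * y s) * Real.cos (θ s)))) s := by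
    intro s
    have h1 : HasDerivAt (fun u => μ * Real.exp (z u))
        (μ * (Real.exp (z s) * Real.sin (θ s))) s := ((hz s).exp).const_mul μ
    have h2 := (hθ s).cos
    have h3 : HasDerivAt (fun u => lam + μ * y u)
        (μ * (Real.exp (z s) * Real.cos (θ s))) s := ((hy s).const_mul μ).const_add lam
    have h4 := (hθ s).sin
    have := (h1.mul h2).sub (h3.mul h4)
    refine this.congr_deriv (Eq.symm ?_)
    ring
  -- the integrating factor
  have hgc : Continuous (fun u : ℝ => Real.exp (-z u) *
      (μ * Real.exp (z u) * Real.sin (θ u) + (lam + μ * y u) * Real.cos (θ u))) := by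
    fun_prop
  set G : ℝ → ℝ := fun s => ∫ t in (0:ℝ)..s, Real.exp (-z t) *
      (μ * Real.exp (z t) * Real.sin (θ t) + (lam + μ * y t) * Real.cos (θ t)) with hGdef
  have hG : ∀ s : ℝ, HasDerivAt G (Real.exp (-z s) *
      (μ * Real.exp (z s) * Real.sin (θ s) + (lam + μ * y s) * Real.cos (θ s))) s := by
    intro s
    exact (hgc.integral_hasStrictDerivAt 0 s).hasDerivAt
  have hG0 : G 0 = 0 := by simp [hGdef]
  -- the product W * exp G is constant
  have hh : ∀ s : ℝ, HasDerivAt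
      (fun u => (μ * Real.exp (z u) * Real.cos (θ u) - (lam + μ * y u) * Real.sin (θ u)) *
        Real.exp (G u)) 0 s := by
    intro s
    have := (hWd s).mul ((hG s).exp)
    refine this.congr_deriv (Eq.symm ?_)
    have hez : Real.exp (-z s) * Real.exp (z s) = 1 := by
      rw [← Real.exp_add]; simp
    linear_combination (-(Real.exp (G s) *
      (μ * Real.exp (z s) * Real.sin (θ s) + (lam + μ * y s) * Real.cos (θ s)) *
      (μ * Real.cos (θ s)))) * hez
  have hconst : ∀ s : ℝ,
      (μ * Real.exp (z s) * Real.cos (θ s) - (lam + μ * y s) * Real.sin (θ s)) *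
        Real.exp (G s) = μ * Real.cos θ₀ - lam * Real.sin θ₀ := by
    intro s
    have h2 := is_const_of_deriv_eq_zero (fun x => (hh x).differentiableAt)
      (fun x => (hh x).deriv) s 0
    rw [h2]
    simp [hy0, hz0, hθ0, hG0]
  have hWval : ∀ s : ℝ,
      μ * Real.exp (z s) * Real.cos (θ s) - (lam + μ * y s) * Real.sin (θ s)
        = (μ * Real.cos θ₀ - lam * Real.sin θ₀) * Real.exp (-(G s)) := by
    intro s
    have h := hconst s
    have he : Real.exp (-(G s)) * Real.exp (G s) = 1 := by rw [← Real.exp_add]; simp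
    linear_combination Real.exp (-(G s)) * h -
      (μ * Real.exp (z s) * Real.cos (θ s) - (lam + μ * y s) * Real.sin (θ s)) * he
  -- the derivative of θ never vanishes
  have hDval : ∀ s : ℝ,
      -lam * Real.exp (-z s) * Real.sin (θ s) +
        μ * (Real.cos (θ s) - y s * Real.exp (-z s) * Real.sin (θ s))
      = Real.exp (-z s) * ((μ * Real.cos θ₀ - lam * Real.sin θ₀) * Real.exp (-(G s))) := by
    intro s
    rw [← hWval s]
    have hez : Real.exp (-z s) * Real.exp (z s) = 1 := by rw [← Real.exp_add]; simp
    linear_combination (-(μ * Real.cos (θ s))) * hez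
  have hDne : ∀ s : ℝ,
      -lam * Real.exp (-z s) * Real.sin (θ s) +
        μ * (Real.cos (θ s) - y s * Real.exp (-z s) * Real.sin (θ s)) ≠ 0 := by
    intro s
    rw [hDval s]
    exact mul_ne_zero (Real.exp_ne_zero _) (mul_ne_zero hc0 (Real.exp_ne_zero _))
  -- θ is injective
  have hinj : Function.Injective θ := by
    intro a b hab'
    by_contra hne'
    rcases lt_or_gt_of_ne hne' with h | h
    · obtain ⟨c, _, hc0'⟩ := exists_hasDerivAt_eq_zero h (hcθ.continuousOn) hab'
        (fun x _ => hθ x)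
      exact hDne c hc0'
    · obtain ⟨c, _, hc0'⟩ := exists_hasDerivAt_eq_zero h (hcθ.continuousOn) hab'.symm
        (fun x _ => hθ x)
      exact hDne c hc0'
  -- at zeros of sin∘θ, cosines have the same (nonzero) sign
  have hcW : ∀ s : ℝ, Real.sin (θ s) = 0 →
      Real.cos (θ s) * ((μ * Real.cos θ₀ - lam * Real.sin θ₀) * Real.exp (-(G s)))
        = μ * Real.exp (z s) := by
    intro s hs
    rw [← hWval s]
    have hc2 : Real.cos (θ s) ^ 2 = 1 := by
      have := Real.sin_sq_add_cos_sq (θ s)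
      rw [hs] at this; simpa using this
    rw [hs]
    linear_combination (μ * Real.exp (z s)) * hc2
  have hprod : ∀ s t : ℝ, Real.sin (θ s) = 0 → Real.sin (θ t) = 0 →
      0 < Real.cos (θ s) * Real.cos (θ t) := by
    intro s t hs ht
    have h1 := hcW s hs
    have h2 := hcW t ht
    set c₀ := μ * Real.cos θ₀ - lam * Real.sin θ₀ with hc₀def
    have hkey : (Real.cos (θ s) * Real.cos (θ t)) *
        ((c₀ * Real.exp (-(G s))) * (c₀ * Real.exp (-(G t))))
        = (μ * Real.exp (z s)) * (μ * Real.exp (z t)) := by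
      linear_combination (Real.cos (θ t) * (c₀ * Real.exp (-(G t)))) * h1 +
        (μ * Real.exp (z s)) * h2
    have hWW : 0 < (c₀ * Real.exp (-(G s))) * (c₀ * Real.exp (-(G t))) := by
      have h := mul_pos (mul_self_pos.mpr hc0)
        (mul_pos (Real.exp_pos (-(G s))) (Real.exp_pos (-(G t))))
      nlinarith [h]
    have hR : 0 < (μ * Real.exp (z s)) * (μ * Real.exp (z t)) := by
      have h := mul_pos (mul_self_pos.mpr hμ)
        (mul_pos (Real.exp_pos (z s)) (Real.exp_pos (z t)))
      nlinarith [h]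
    nlinarith [hkey, hWW, hR]
  have hsq : ∀ s : ℝ, Real.sin (θ s) = 0 →
      Real.cos (θ s) * Real.cos (θ s) = 1 := by
    intro s hs
    have := Real.sin_sq_add_cos_sq (θ s)
    rw [hs] at this; nlinarith [this]
  have hcoseq : ∀ s t : ℝ, Real.sin (θ s) = 0 → Real.sin (θ t) = 0 →
      Real.cos (θ s) = Real.cos (θ t) := by
    intro s t hs ht
    have hp := hprod s t hs ht
    rcases mul_self_eq_one_iff.mp (hsq s hs) with h | h <;>
      rcases mul_self_eq_one_iff.mp (hsq t ht) with h' | h' <;>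
        rw [h, h'] <;> rw [h, h'] at hp <;> norm_num at hp
  -- the bridge lemma: from equal sin and cos at distinct points, find a point π further
  have bridge : ∀ s t : ℝ, s ≠ t → Real.sin (θ s) = Real.sin (θ t) →
      Real.cos (θ s) = Real.cos (θ t) →
      ∃ r ∈ Set.uIcc s t, Real.sin (θ r) = -Real.sin (θ s) ∧
        Real.cos (θ r) = -Real.cos (θ s) := by
    intro s t hst hsin hcos
    have hang : ((θ s : ℝ) : Real.Angle) = ((θ t : ℝ) : Real.Angle) :=
      Real.Angle.cos_sin_inj hcos hsin
    obtain ⟨k, hk⟩ := Real.Angle.angle_eq_iff_two_pi_dvd_sub.mp hang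
    have hθne : θ s ≠ θ t := fun h => hst (hinj h)
    have hkne : k ≠ 0 := by
      intro h0
      apply hθne
      have : θ s - θ t = 0 := by rw [hk, h0]; simp
      linarith
    have hk1 : (1 : ℝ) ≤ |(k : ℝ)| := by exact_mod_cast Int.one_le_abs hkne
    have habs : 2 * π ≤ |θ s - θ t| := by
      rw [hk, abs_mul]
      have h2π : |2 * π| = 2 * π := abs_of_pos (by positivity)
      rw [h2π]
      nlinarith [Real.pi_pos]
    have hminmax : max (θ s) (θ t) - min (θ s) (θ t) = |θ s - θ t| := by
      rw [max_sub_min_eq_abs, abs_sub_comm]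
    have hmem : min (θ s) (θ t) + π ∈ Set.uIcc (θ s) (θ t) := by
      rw [← Set.Icc_min_max]
      constructor
      · linarith [Real.pi_pos]
      · linarith [Real.pi_pos]
    obtain ⟨r, hr, hθr⟩ := intermediate_value_uIcc (hcθ.continuousOn) hmem
    have hsm : Real.sin (min (θ s) (θ t)) = Real.sin (θ s) := by
      rcases min_choice (θ s) (θ t) with h | h <;> rw [h]
      exact hsin.symm
    have hcm : Real.cos (min (θ s) (θ t)) = Real.cos (θ s) := by
      rcases min_choice (θ s) (θ t) with h | h <;> rw [h]
      exact hcos.symm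
    refine ⟨r, hr, ?_, ?_⟩
    · rw [hθr, Real.sin_add_pi, hsm]
    · rw [hθr, Real.cos_add_pi, hcm]
  -- Part 1
  have part1 : {s : ℝ | Real.sin (θ s) = 0}.Subsingleton := by
    intro s hs t ht
    simp only [Set.mem_setOf_eq] at hs ht
    by_contra hst
    obtain ⟨r, hr, hsr, hcr⟩ := bridge s t hst (by rw [hs, ht]) (hcoseq s t hs ht)
    have hsr0 : Real.sin (θ r) = 0 := by rw [hsr, hs]; ring
    have hp := hprod s r hs hsr0
    have h1 := hsq s hs
    rw [hcr] at hp
    nlinarith [hp, h1]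
  refine ⟨part1, ?_⟩
  -- pair lemma for cos-zeros
  have pair : ∀ s t : ℝ, s < t → Real.cos (θ s) = 0 → Real.cos (θ t) = 0 →
      ∃ w ∈ Set.Ioo s t, Real.sin (θ w) = 0 := by
    intro s t hst hcs hct
    by_contra hno
    push_neg at hno
    have hss : Real.sin (θ s) * Real.sin (θ s) = 1 := by
      nlinarith [Real.sin_sq_add_cos_sq (θ s)]
    have htt : Real.sin (θ t) * Real.sin (θ t) = 1 := by
      nlinarith [Real.sin_sq_add_cos_sq (θ t)]
    have hsne : Real.sin (θ s) ≠ 0 := by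
      intro h; rw [h] at hss; norm_num at hss
    have htne : Real.sin (θ t) ≠ 0 := by
      intro h; rw [h] at htt; norm_num at htt
    have hzero : ∀ r, r ∈ Set.Icc s t → Real.sin (θ r) = -Real.sin (θ s) → False := by
      intro r hr hsr
      have h0 : (0 : ℝ) ∈ Set.uIcc (Real.sin (θ s)) (Real.sin (θ r)) := by
        rw [hsr]
        rcases mul_self_eq_one_iff.mp hss with h | h <;> rw [h] <;>
          simp [Set.mem_uIcc] <;> norm_num
      have hcont : ContinuousOn (fun u => Real.sin (θ u)) (Set.uIcc s r) :=
        (Real.continuous_sin.comp hcθ).continuousOn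
      obtain ⟨w, hw, hw0⟩ := intermediate_value_uIcc hcont h0
      have hsub : Set.uIcc s r ⊆ Set.Icc s t := by
        rw [Set.uIcc_of_le hr.1]
        exact Set.Icc_subset_Icc le_rfl hr.2
      have hwmem := hsub hw
      have hws : w ≠ s := by
        intro h; rw [h] at hw0; exact hsne hw0
      have hwt : w ≠ t := by
        intro h; rw [h] at hw0; exact htne hw0
      exact hno w ⟨lt_of_le_of_ne hwmem.1 (Ne.symm hws), lt_of_le_of_ne hwmem.2 hwt⟩ hw0
    have hsin_eq : Real.sin (θ s) = Real.sin (θ t) := by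
      rcases mul_self_eq_one_iff.mp hss with h | h <;>
        rcases mul_self_eq_one_iff.mp htt with h' | h' <;> rw [h, h']
      · exfalso
        exact hzero t ⟨hst.le, le_rfl⟩ (by simp [h, h'])
      · exfalso
        exact hzero t ⟨hst.le, le_rfl⟩ (by simp [h, h'])
    obtain ⟨r, hr, hsr, _⟩ := bridge s t hst.ne hsin_eq (by rw [hcs, hct])
    exact hzero r (by rwa [Set.uIcc_of_le hst.le] at hr) hsr
  -- three cos-zeros are impossible
  have triple : ∀ p q r : ℝ, p < q → q < r → Real.cos (θ p) = 0 →
      Real.cos (θ q) = 0 → Real.cos (θ r) = 0 → False := by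
    intro p q r h1 h2 hp hq hr
    obtain ⟨w₁, hw₁, hs₁⟩ := pair p q h1 hp hq
    obtain ⟨w₂, hw₂, hs₂⟩ := pair q r h2 hq hr
    have heq : w₁ = w₂ := part1 hs₁ hs₂
    have := hw₁.2
    have := hw₂.1
    linarith
  by_contra hcard
  push_neg at hcard
  have h3 : (3 : ℕ∞) ≤ {s : ℝ | Real.cos (θ s) = 0}.encard := by
    simpa [show (2:ℕ∞) + 1 = 3 by norm_num] using Order.add_one_le_of_lt hcard
  obtain ⟨T, hTsub, hT3⟩ := Set.exists_subset_encard_eq h3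
  obtain ⟨a, b, c, hab, hac, hbc, rfl⟩ := Set.encard_eq_three.mp hT3
  have ha : Real.cos (θ a) = 0 := hTsub (by simp)
  have hb : Real.cos (θ b) = 0 := hTsub (by simp)
  have hc : Real.cos (θ c) = 0 := hTsub (by simp)
  rcases (Ne.lt_or_gt hab) with h1 | h1 <;> rcases (Ne.lt_or_gt hbc) with h2 | h2 <;>
    rcases (Ne.lt_or_gt hac) with h3' | h3'
  · exact triple a b c h1 h2 ha hb hc
  · linarith
  · exact triple a c b h3' h2 ha hc hb
  · exact triple c a b h3' h1 hc ha hb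
  · exact triple b a c h1 h3' hb ha hc
  · exact triple b c a h2 h3' hb hc ha
  · linarith
  · exact triple c b a h2 h1 hc hb ha
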